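/- Let S be a finite set of points in the Euclidean plane and G the weighted unit-disk graph on S. Let ⟨z₀, …, z_t⟩ with t ≥ 2 be an edge-minimal shortest path from s = z₀ to a = z_t in G, and let c ∈ S be a vertex in the same connected component as s with ‖c − a‖ ≤ 1. Then d_G(s, z_{t−2}) < d_G(s, c). -/

import Mathlib

noncomputable section

abbrev Pt := EuclideanSpace ℝ (Fin 2)

/-- The weighted unit-disk graph on a finite point set `S`: vertices are the points of
`S`, two distinct points are adjacent iff their Euclidean distance is at most 1. -/
def UDG (S : Finset Pt) : SimpleGraph {x : Pt // x ∈ S} where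
  Adj a b := a ≠ b ∧ dist (a : Pt) (b : Pt) ≤ 1
  symm := by
    constructor
    intro a b hab
    exact ⟨hab.1.symm, by rw [dist_comm]; exact hab.2⟩
  loopless := by
    constructor
    intro a ha
    exact ha.1 rfl

/-- The (weighted) length of a walk: the sum of the Euclidean lengths of its edges. -/
def wlen {S : Finset Pt} {u v : {x : Pt // x ∈ S}} (p : (UDG S).Walk u v) : ℝ :=
  (p.darts.map (fun d => dist (d.toProd.1 : Pt) (d.toProd.2 : Pt))).sum

/-- The shortest-path distance in the weighted unit-disk graph. -/
def dG (S : Finset Pt) (u v : {x : Pt // x ∈ S}) : ℝ :=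
  sInf {L : ℝ | ∃ p : (UDG S).Walk u v, wlen p = L}


lemma wlen_nonneg {S : Finset Pt} {u v : {x : Pt // x ∈ S}} (p : (UDG S).Walk u v) :
    0 ≤ wlen p := by
  apply List.sum_nonneg
  intro x hx
  simp only [List.mem_map] at hx
  obtain ⟨d, _, rfl⟩ := hx
  exact dist_nonneg

lemma wlen_cons {S : Finset Pt} {u v w : {x : Pt // x ∈ S}} (h : (UDG S).Adj u v)
    (p : (UDG S).Walk v w) : wlen (SimpleGraph.Walk.cons h p) = dist (u : Pt) v + wlen p := by
  simp [wlen, SimpleGraph.Walk.darts_cons]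

lemma wlen_append {S : Finset Pt} {u v w : {x : Pt // x ∈ S}} (p : (UDG S).Walk u v)
    (q : (UDG S).Walk v w) : wlen (p.append q) = wlen p + wlen q := by
  simp [wlen, SimpleGraph.Walk.darts_append]

lemma wlen_concat {S : Finset Pt} {u v w : {x : Pt // x ∈ S}} (p : (UDG S).Walk u v)
    (h : (UDG S).Adj v w) : wlen (p.concat h) = wlen p + dist (v : Pt) w := by
  rw [SimpleGraph.Walk.concat_eq_append, wlen_append, wlen_cons]
  simp [wlen]

lemma wlen_reverse {S : Finset Pt} {u v : {x : Pt // x ∈ S}} (p : (UDG S).Walk u v) :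
    wlen p.reverse = wlen p := by
  rw [wlen, SimpleGraph.Walk.darts_reverse, List.map_reverse, List.sum_reverse,
    List.map_map, wlen]
  congr 1
  apply List.map_congr_left
  intro d _
  simp [SimpleGraph.Dart.symm, dist_comm]

lemma dG_le {S : Finset Pt} {u v : {x : Pt // x ∈ S}} (p : (UDG S).Walk u v) :
    dG S u v ≤ wlen p :=
  csInf_le ⟨0, fun _ ⟨q, hq⟩ => hq ▸ wlen_nonneg q⟩ ⟨p, rfl⟩

lemma le_dG {S : Finset Pt} {u v : {x : Pt // x ∈ S}} (h : (UDG S).Reachable u v)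
    {L : ℝ} (hL : ∀ p : (UDG S).Walk u v, L ≤ wlen p) : L ≤ dG S u v := by
  have hne : {L : ℝ | ∃ p : (UDG S).Walk u v, wlen p = L}.Nonempty := ⟨wlen h.some, h.some, rfl⟩
  apply le_csInf hne
  rintro x ⟨q, rfl⟩
  exact hL q

/-- Consequence derived in the proof of Lemma 3: if `c` is reachable from `s` and within
Euclidean distance 1 of `a`, then `d_G(s, z_{t-2}) < d_G(s, c)` for an edge-minimal
shortest path `⟨z_0, …, z_t⟩` from `s` to `a` with `t ≥ 2`. -/
theorem stmt_10 (S : Finset Pt) (s a c : {x : Pt // x ∈ S})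
    (p : (UDG S).Walk s a) (hsp : wlen p = dG S s a)
    (hmin : ∀ q : (UDG S).Walk s a, wlen q = dG S s a → p.length ≤ q.length)
    (ht : 2 ≤ p.length)
    (hreach : (UDG S).Reachable s c) (hca : dist (c : Pt) (a : Pt) ≤ 1) :
    dG S s (p.getVert (p.length - 2)) < dG S s c := by
  have hrl : p.reverse.length = p.length := SimpleGraph.Walk.length_reverse p
  have h1 : ¬ p.reverse.Nil := by
    rw [SimpleGraph.Walk.not_nil_iff_lt_length]; omega
  obtain ⟨b, hab, w1, hw⟩ := SimpleGraph.Walk.not_nil_iff.mp h1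
  have hw1l : w1.length = p.length - 1 := by
    have := hrl; rw [hw] at this; simp at this; omega
  have h2 : ¬ w1.Nil := by
    rw [SimpleGraph.Walk.not_nil_iff_lt_length]; omega
  obtain ⟨z, hbz, w2, hw1⟩ := SimpleGraph.Walk.not_nil_iff.mp h2
  have hw2l : w2.length = p.length - 2 := by
    have := hw1l; rw [hw1] at this; simp at this; omega
  -- identify the vertex
  have hz : p.getVert (p.length - 2) = z := by
    have h := SimpleGraph.Walk.getVert_reverse p 2
    rw [hw, hw1] at h
    rw [← h]
    rw [show (2 : ℕ) = 0 + 1 + 1 from rfl, SimpleGraph.Walk.getVert_cons_succ,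
      SimpleGraph.Walk.getVert_cons_succ, SimpleGraph.Walk.getVert_zero]
  rw [hz]
  -- weighted length decomposition
  set e : ℝ := dist (a : Pt) (b : Pt) + dist (b : Pt) (z : Pt) with he
  have hwp : wlen p = e + wlen w2 := by
    rw [← wlen_reverse p, hw, hw1, wlen_cons, wlen_cons]; ring
  have hepos : 0 < e := by
    have : (0:ℝ) < dist (a : Pt) (b : Pt) :=
      dist_pos.mpr (Subtype.coe_ne_coe.mpr hab.1)
    have := dist_nonneg (x := (b : Pt)) (y := (z : Pt))
    linarith
  have hdza : dist (z : Pt) (a : Pt) ≤ e := by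
    calc dist (z : Pt) (a : Pt) ≤ dist (z : Pt) (b : Pt) + dist (b : Pt) (a : Pt) :=
          dist_triangle _ _ _
      _ = e := by rw [he, dist_comm (z : Pt), dist_comm (b : Pt) (a : Pt)]; ring
  have hdw2 : dG S s z ≤ wlen w2 := by
    have := dG_le w2.reverse
    rwa [wlen_reverse] at this
  -- Step A : 1 < e
  have h1e : 1 < e := by
    by_contra hle
    push_neg at hle
    rcases eq_or_ne z a with heq | hzne
    · subst heq
      rw [hsp] at hwp
      linarith
    · have hadj : (UDG S).Adj z a := ⟨hzne, le_trans hdza hle⟩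
      have hq1 : dG S s a ≤ wlen (w2.reverse.concat hadj) := dG_le _
      have hq2 : wlen (w2.reverse.concat hadj) ≤ dG S s a := by
        rw [wlen_concat, wlen_reverse, ← hsp, hwp]
        linarith
      have := hmin (w2.reverse.concat hadj) (le_antisymm hq2 hq1)
      rw [SimpleGraph.Walk.length_concat, SimpleGraph.Walk.length_reverse] at this
      omega
  have hA : dG S s z + 1 < dG S s a := by
    rw [← hsp, hwp]; linarith
  -- Step B : dG s a ≤ dG s c + dist c a
  have hB : dG S s a ≤ dG S s c + dist (c : Pt) (a : Pt) := by
    rcases eq_or_ne c a with rfl | hcne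
    · have := dist_nonneg (x := (c : Pt)) (y := (c : Pt))
      linarith
    · have hadj : (UDG S).Adj c a := ⟨hcne, hca⟩
      have : dG S s a - dist (c : Pt) (a : Pt) ≤ dG S s c := by
        apply le_dG hreach
        intro q
        have h1 : dG S s a ≤ wlen (q.concat hadj) := dG_le _
        rw [wlen_concat] at h1
        linarith
      linarith
  linarith
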